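/- arXiv:1808.00119 — 2 statements merged into one kernel-verified Lean document; each statement's English description precedes it below -/
import Mathlib

section
/- Let K be a field and let 0 → A• → B• → C• → 0 be a short exact sequence of cochain complexes of finite-dimensional K-vector spaces. Then for every integer i, the rank of the connecting homomorphism δ^i : H^i(C•) → H^{i+1}(A•) of the associated long exact cohomology sequence equals rk(d_B^i) − rk(d_A^i) − rk(d_C^i), where d_A^i, d_B^i, d_C^i denote the differentials in degree i of A•, B•, C• respectively. -/
open CategoryTheory HomologicalComplex
open Limits

/-- The rank of a morphism of `K`-modules (in the category `ModuleCat K`),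
i.e. the dimension of its image. -/
noncomputable def ModuleCat.rank {K : Type*} [Field K] {M N : ModuleCat K}
    (f : M ⟶ N) : ℕ :=
  Module.finrank K (LinearMap.range f.hom)

lemma homologyπ_eq_zero_iff_aux {K : Type*} [Field K]
    (M : CochainComplex (ModuleCat K) ℤ) (i j : ℤ) (hij : i + 1 = j)
    (z : M.cycles j) :
    M.homologyπ j z = 0 ↔ ∃ a : M.X i, M.toCycles i j a = z := by
  constructor
  · intro hz
    have hprev : (ComplexShape.up ℤ).prev j = i := by rw [CochainComplex.prev]; omega
    have hcoker := M.homologyIsCokernel i j hprev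
    set q : M.cycles j ⟶ ModuleCat.of K (M.cycles j ⧸ LinearMap.range (M.toCycles i j).hom) :=
      ModuleCat.ofHom (LinearMap.range (M.toCycles i j).hom).mkQ with hq
    have hw : M.toCycles i j ≫ q = 0 := by
      ext a
      exact (Submodule.Quotient.mk_eq_zero _).2 ⟨a, rfl⟩
    have hdesc : M.homologyπ j ≫ hcoker.desc (CokernelCofork.ofπ q hw) = q :=
      Cofork.IsColimit.π_desc hcoker
    have : q z = 0 := by
      rw [← hdesc]
      show (hcoker.desc (CokernelCofork.ofπ q hw)) (M.homologyπ j z) = 0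
      rw [hz, map_zero]
    exact (Submodule.Quotient.mk_eq_zero _).1 this
  · rintro ⟨a, rfl⟩
    have := M.toCycles_comp_homologyπ i j
    calc (M.homologyπ j) ((M.toCycles i j) a) = (M.toCycles i j ≫ M.homologyπ j) a := rfl
    _ = 0 := by rw [this]; rfl

set_option maxHeartbeats 2000000

/-- **Rank of the connecting homomorphism.**
Let `0 → A• → B• → C• → 0` be a short exact sequence of cochain complexes of
finite-dimensional `K`-vector spaces.  Then for every `i : ℤ`, the rank of the connecting
homomorphism `δ^i : H^i(C•) → H^{i+1}(A•)` of the long exact cohomology sequence equals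
`rk(d_B^i) − rk(d_A^i) − rk(d_C^i)`. -/
theorem rank_delta_eq {K : Type*} [Field K]
    (S : ShortComplex (CochainComplex (ModuleCat K) ℤ))
    (hS : S.ShortExact)
    (hA : ∀ i : ℤ, FiniteDimensional K (S.X₁.X i))
    (hB : ∀ i : ℤ, FiniteDimensional K (S.X₂.X i))
    (hC : ∀ i : ℤ, FiniteDimensional K (S.X₃.X i))
    (i : ℤ) :
    (ModuleCat.rank (hS.δ i (i + 1) rfl) : ℤ)
      = ModuleCat.rank (S.X₂.d i (i + 1))
        - ModuleCat.rank (S.X₁.d i (i + 1))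
        - ModuleCat.rank (S.X₃.d i (i + 1)) := by

  haveI := hA i; haveI := hA (i+1); haveI := hB i; haveI := hB (i+1); haveI := hC i
  haveI := hC (i+1)
  -- commutation relations, elementwise (before `set`)
  have hcommf : ∀ x : S.X₁.X i, S.f.f (i+1) (S.X₁.d i (i+1) x) = S.X₂.d i (i+1) (S.f.f i x) := by
    intro x
    exact (ConcreteCategory.congr_hom (S.f.comm i (i+1)) x).symm
  have hcommf' : ∀ x : S.X₁.X (i+1),
      S.f.f (i+2) (S.X₁.d (i+1) (i+2) x) = S.X₂.d (i+1) (i+2) (S.f.f (i+1) x) := by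
    intro x
    exact (ConcreteCategory.congr_hom (S.f.comm (i+1) (i+2)) x).symm
  have hcommg : ∀ x : S.X₂.X i, S.g.f (i+1) (S.X₂.d i (i+1) x) = S.X₃.d i (i+1) (S.g.f i x) := by
    intro x
    exact (ConcreteCategory.congr_hom (S.g.comm i (i+1)) x).symm
  have hddB : ∀ x : S.X₂.X i, S.X₂.d (i+1) (i+2) (S.X₂.d i (i+1) x) = 0 := by
    intro x
    exact ConcreteCategory.congr_hom (S.X₂.d_comp_d i (i+1) (i+2)) x
  -- basic maps as linear maps
  set dA : S.X₁.X i →ₗ[K] S.X₁.X (i+1) := (S.X₁.d i (i+1)).hom with hdA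
  set dB : S.X₂.X i →ₗ[K] S.X₂.X (i+1) := (S.X₂.d i (i+1)).hom with hdB
  set dC : S.X₃.X i →ₗ[K] S.X₃.X (i+1) := (S.X₃.d i (i+1)).hom with hdC
  set fi : S.X₁.X i →ₗ[K] S.X₂.X i := (S.f.f i).hom with hfi'
  set fj : S.X₁.X (i+1) →ₗ[K] S.X₂.X (i+1) := (S.f.f (i+1)).hom with hfj'
  set gi : S.X₂.X i →ₗ[K] S.X₃.X i := (S.g.f i).hom with hgi'
  set gj : S.X₂.X (i+1) →ₗ[K] S.X₃.X (i+1) := (S.g.f (i+1)).hom with hgj'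
  -- degreewise exactness facts
  have hfjinj : Function.Injective fj :=
    (hS.map_of_exact (HomologicalComplex.eval _ _ (i+1))).injective_f
  have hfiinj : Function.Injective fi :=
    (hS.map_of_exact (HomologicalComplex.eval _ _ i)).injective_f
  have hfkinj : Function.Injective (S.f.f (i+2)) :=
    (hS.map_of_exact (HomologicalComplex.eval _ _ (i+2))).injective_f
  have hgisurj : Function.Surjective gi :=
    (hS.map_of_exact (HomologicalComplex.eval _ _ i)).surjective_g
  have hexj : LinearMap.range fj = LinearMap.ker gj :=
    (hS.map_of_exact (HomologicalComplex.eval _ _ (i+1))).exact.moduleCat_range_eq_ker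
  have hnext1 : (ComplexShape.up ℤ).next i = i + 1 := CochainComplex.next ℤ i
  have hnext2 : (ComplexShape.up ℤ).next (i+1) = i + 2 := by rw [CochainComplex.next]; ring
  -- the submodule W
  set W : Submodule K (S.X₂.X i) := Submodule.comap dB (LinearMap.range fj) with hW
  -- the lift α : W →ₗ A^{i+1} with fj (α b) = dB b
  set e : S.X₁.X (i+1) ≃ₗ[K] LinearMap.range fj := LinearEquiv.ofInjective fj hfjinj with he
  set ρ : W →ₗ[K] LinearMap.range fj :=
    LinearMap.codRestrict _ (dB.domRestrict W) (fun b => b.2) with hρ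
  set α : W →ₗ[K] S.X₁.X (i+1) := (e.symm : LinearMap.range fj →ₗ[K] S.X₁.X (i+1)).comp ρ with hα'
  have hα : ∀ b : W, fj (α b) = dB b := by
    intro b
    have h1 : (e (e.symm (ρ b)) : S.X₂.X (i+1)) = (ρ b : S.X₂.X (i+1)) := by
      rw [e.apply_symm_apply]
    have h2 : (e (α b) : S.X₂.X (i+1)) = fj (α b) := by
      rw [he]; exact rfl
    have h3 : α b = e.symm (ρ b) := rfl
    rw [h3, ← h2, h3] at *
    exact h1
  have hαcycle : ∀ b : W, S.X₁.d (i+1) (i+2) (α b) = 0 := by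
    intro b
    apply hfkinj
    rw [map_zero, hcommf' (α b), hα b]
    exact hddB b
  have hwα : (ModuleCat.ofHom α) ≫ S.X₁.d (i+1) (i+2) = 0 := by
    ext b
    exact hαcycle b
  -- Φ : W ⟶ homology A (i+1)
  set Pc : ModuleCat.of K W ⟶ S.X₁.cycles (i+1) :=
    S.X₁.liftCycles (ModuleCat.ofHom α) (i+2) hnext2 hwα with hPc'
  have hPc : ∀ b : W, S.X₁.iCycles (i+1) (Pc b) = α b := by
    intro b
    have := S.X₁.liftCycles_i (ModuleCat.ofHom α) (i+2) hnext2 hwα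
    exact ConcreteCategory.congr_hom this b
  have hiCinj : Function.Injective (S.X₁.iCycles (i+1)) :=
    (ModuleCat.mono_iff_injective _).1 inferInstance
  have hiCinj₃ : Function.Injective (S.X₃.iCycles i) :=
    (ModuleCat.mono_iff_injective _).1 inferInstance
  set Φ : ModuleCat.of K W ⟶ S.X₁.homology (i+1) := Pc ≫ S.X₁.homologyπ (i+1) with hΦ'
  have hΦapp : ∀ b : W, Φ b = S.X₁.homologyπ (i+1) (Pc b) := fun b => rfl
  -- δ computation: for b in W, Φ b = δ (class of gi b)
  have hδΦ : ∀ b : W, ∀ (hcyc : S.X₃.d i (i+1) (gi (b : S.X₂.X i)) = 0),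
      hS.δ i (i+1) rfl (S.X₃.homologyπ i (S.X₃.cyclesMk (gi (b : S.X₂.X i)) (i+1) hnext1 hcyc))
        = Φ b := by
    intro b hcyc
    have hx₁ : S.f.f (i+1) (α b) = S.X₂.d i (i+1) (b : S.X₂.X i) := hα b
    have happ : hS.δ i (i+1) rfl
        (S.X₃.homologyπ i (S.X₃.cyclesMk (gi (b : S.X₂.X i)) (i+1) hnext1 hcyc))
        = S.X₁.homologyπ (i+1) (S.X₁.cyclesMk (α b) (i+2) hnext2
            (hαcycle b)) :=
      hS.δ_apply i (i+1) rfl (gi (b : S.X₂.X i)) hcyc (b : S.X₂.X i) rfl (α b) hx₁ (i+2) hnext2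
    rw [happ, hΦapp]
    congr 1
    apply hiCinj
    rw [hPc b]
    have : S.X₁.iCycles (i+1) (S.X₁.cyclesMk (α b) (i+2) hnext2 (hαcycle b)) = α b :=
      S.X₁.i_cyclesMk (α b) (i+2) hnext2 _
    rw [this]

  -- g ∘ f = 0 in degree i+1
  have hgf : ∀ x : S.X₁.X (i+1), gj (fj x) = 0 := by
    intro x
    have : fj x ∈ LinearMap.ker gj := hexj ▸ LinearMap.mem_range_self fj x
    exact this
  set δh : S.X₃.homology i ⟶ S.X₁.homology (i+1) := hS.δ i (i+1) rfl with hδh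
  -- range Φ = range δ
  have hrange : LinearMap.range Φ.hom = LinearMap.range δh.hom := by
    apply le_antisymm
    · rintro x ⟨b, rfl⟩
      obtain ⟨bv, hbv⟩ := b
      have hcyc : S.X₃.d i (i+1) (gi ((⟨bv, hbv⟩ : W) : S.X₂.X i)) = 0 := by
        show dC (gi bv) = 0
        rw [← hcommg bv]
        have hb1 : dB bv = fj (α ⟨bv, hbv⟩) := (hα ⟨bv, hbv⟩).symm
        rw [hb1]
        exact hgf (α ⟨bv, hbv⟩)
      exact ⟨_, hδΦ ⟨bv, hbv⟩ hcyc⟩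
    · rintro x ⟨h, rfl⟩
      have hπ₃surj : Function.Surjective (S.X₃.homologyπ i) :=
        (ModuleCat.epi_iff_surjective _).1 inferInstance
      obtain ⟨z, rfl⟩ := hπ₃surj h
      have hc : S.X₃.d i (i+1) (S.X₃.iCycles i z) = 0 :=
        ConcreteCategory.congr_hom (S.X₃.iCycles_d i (i+1)) z
      obtain ⟨b, hb⟩ := hgisurj (S.X₃.iCycles i z)
      have hbW : b ∈ W := by
        show dB b ∈ LinearMap.range fj
        rw [hexj]
        show gj (dB b) = 0
        rw [hcommg b, hb]
        exact hc
      have hcyc' : S.X₃.d i (i+1) (gi ((⟨b, hbW⟩ : W) : S.X₂.X i)) = 0 := by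
        show dC (gi b) = 0
        rw [hb]
        exact hc
      have hzz : S.X₃.cyclesMk (gi ((⟨b, hbW⟩ : W) : S.X₂.X i)) (i+1) hnext1 hcyc' = z := by
        apply hiCinj₃
        have h2 : S.X₃.iCycles i (S.X₃.cyclesMk (gi ((⟨b, hbW⟩ : W) : S.X₂.X i)) (i+1) hnext1 hcyc')
            = gi b := S.X₃.i_cyclesMk _ (i+1) hnext1 hcyc'
        exact h2.trans hb
      refine ⟨⟨b, hbW⟩, ?_⟩
      rw [← hδΦ ⟨b, hbW⟩ hcyc', hzz]
  -- kernel of Φ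
  have hkerSub : LinearMap.ker dB ≤ W := by
    intro x hx
    show dB x ∈ LinearMap.range fj
    rw [LinearMap.mem_ker.mp hx]
    exact zero_mem _
  have hfiW : LinearMap.range fi ≤ W := by
    rintro x ⟨a, rfl⟩
    show dB (fi a) ∈ LinearMap.range fj
    exact ⟨dA a, hcommf a⟩
  have hkerΦ : LinearMap.ker Φ.hom
      = Submodule.comap W.subtype (LinearMap.range fi ⊔ LinearMap.ker dB) := by
    ext b
    obtain ⟨bv, hbv⟩ := b
    show Φ ⟨bv, hbv⟩ = 0 ↔ bv ∈ LinearMap.range fi ⊔ LinearMap.ker dB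
    constructor
    · intro hb
      have hb' : S.X₁.homologyπ (i+1) (Pc ⟨bv, hbv⟩) = 0 := hb
      obtain ⟨a, ha⟩ := (homologyπ_eq_zero_iff_aux S.X₁ i (i+1) rfl (Pc ⟨bv, hbv⟩)).1 hb'
      have h1 : S.X₁.iCycles (i+1) (S.X₁.toCycles i (i+1) a) = dA a :=
        ConcreteCategory.congr_hom (S.X₁.toCycles_i i (i+1)) a
      have hda : dA a = α ⟨bv, hbv⟩ := by
        rw [← hPc ⟨bv, hbv⟩, ← ha, h1]
      have hmem : bv - fi a ∈ LinearMap.ker dB := by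
        show dB (bv - fi a) = 0
        have hb1 : dB bv = fj (α ⟨bv, hbv⟩) := (hα ⟨bv, hbv⟩).symm
        rw [map_sub, hb1, ← hda, hcommf a, sub_self]
      exact Submodule.mem_sup.2 ⟨fi a, ⟨a, rfl⟩, bv - fi a, hmem, by abel⟩
    · intro hb
      obtain ⟨x, ⟨a, rfl⟩, u, hu, huv⟩ := Submodule.mem_sup.1 hb
      show S.X₁.homologyπ (i+1) (Pc ⟨bv, hbv⟩) = 0
      apply (homologyπ_eq_zero_iff_aux S.X₁ i (i+1) rfl (Pc ⟨bv, hbv⟩)).2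
      refine ⟨a, ?_⟩
      apply hiCinj
      have h1 : S.X₁.iCycles (i+1) (S.X₁.toCycles i (i+1) a) = dA a :=
        ConcreteCategory.congr_hom (S.X₁.toCycles_i i (i+1)) a
      rw [hPc ⟨bv, hbv⟩, h1]
      apply hfjinj
      have hb1 : fj (α ⟨bv, hbv⟩) = dB bv := hα ⟨bv, hbv⟩
      rw [hcommf a, hb1, ← huv, map_add, LinearMap.mem_ker.mp hu, add_zero]
  -- dimension counting
  haveI : FiniteDimensional K (ModuleCat.of K W) := inferInstanceAs (FiniteDimensional K W)
  haveI : FiniteDimensional K (LinearMap.range dB) := inferInstance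
  have q1 : Module.finrank K (LinearMap.range Φ.hom) + Module.finrank K (LinearMap.ker Φ.hom)
      = Module.finrank K W :=
    LinearMap.finrank_range_add_finrank_ker Φ.hom
  set μ : W →ₗ[K] S.X₂.X (i+1) := dB.domRestrict W with hμ
  have q2 : Module.finrank K (LinearMap.range μ) + Module.finrank K (LinearMap.ker μ)
      = Module.finrank K W := LinearMap.finrank_range_add_finrank_ker μ
  have q2a : LinearMap.range μ = LinearMap.range dB ⊓ LinearMap.range fj := by
    rw [hμ, LinearMap.range_domRestrict, hW, Submodule.map_comap_eq]
  have q2b : Module.finrank K (LinearMap.ker μ) = Module.finrank K (LinearMap.ker dB) := by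
    rw [hμ, LinearMap.ker_domRestrict, ← Submodule.finrank_map_subtype_eq W,
      Submodule.map_comap_subtype, inf_eq_right.2 hkerSub]
  have q3b : Module.finrank K (Submodule.comap W.subtype (LinearMap.range fi ⊔ LinearMap.ker dB))
      = Module.finrank K (LinearMap.range fi ⊔ LinearMap.ker dB : Submodule K (S.X₂.X i)) := by
    rw [← Submodule.finrank_map_subtype_eq W, Submodule.map_comap_subtype,
      inf_eq_right.2 (sup_le hfiW hkerSub)]
  have q3 : Module.finrank K (LinearMap.ker Φ.hom)
      = Module.finrank K (LinearMap.range fi ⊔ LinearMap.ker dB : Submodule K (S.X₂.X i)) :=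
    (congrArg (fun q : Submodule K (ModuleCat.of K W) => Module.finrank K q) hkerΦ).trans q3b
  have q4 := Submodule.finrank_sup_add_finrank_inf_eq (LinearMap.range fi) (LinearMap.ker dB)
  have q5 : Module.finrank K (LinearMap.range fi) = Module.finrank K (S.X₁.X i) :=
    LinearMap.finrank_range_of_inj hfiinj
  have q6 : LinearMap.range fi ⊓ LinearMap.ker dB = Submodule.map fi (LinearMap.ker dA) := by
    apply le_antisymm
    · rintro x hx
      obtain ⟨hx1, hx2⟩ := Submodule.mem_inf.1 hx
      obtain ⟨a, rfl⟩ := hx1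
      refine ⟨a, ?_, rfl⟩
      have h0 : fj (dA a) = fj 0 := by
        rw [hcommf a, map_zero]
        exact hx2
      exact hfjinj h0
    · rintro x ⟨a, ha, rfl⟩
      refine Submodule.mem_inf.2 ⟨⟨a, rfl⟩, ?_⟩
      show dB (fi a) = 0
      rw [← hcommf a, LinearMap.mem_ker.mp ha, map_zero]
  have q6' : Module.finrank K (Submodule.map fi (LinearMap.ker dA))
      = Module.finrank K (LinearMap.ker dA) :=
    (LinearEquiv.finrank_eq (Submodule.equivMapOfInjective fi hfiinj (LinearMap.ker dA))).symm
  have q7 : Module.finrank K (LinearMap.range dA) + Module.finrank K (LinearMap.ker dA)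
      = Module.finrank K (S.X₁.X i) := LinearMap.finrank_range_add_finrank_ker dA
  set ν : LinearMap.range dB →ₗ[K] S.X₃.X (i+1) := gj.domRestrict (LinearMap.range dB) with hν
  have q8a : Module.finrank K (LinearMap.range ν) + Module.finrank K (LinearMap.ker ν)
      = Module.finrank K (LinearMap.range dB) := LinearMap.finrank_range_add_finrank_ker ν
  have q8b : LinearMap.range ν = LinearMap.range dC := by
    rw [hν, LinearMap.range_domRestrict, ← LinearMap.range_comp]
    have h2 : gj ∘ₗ dB = dC ∘ₗ gi := LinearMap.ext hcommg
    rw [h2, LinearMap.range_comp, LinearMap.range_eq_top.2 hgisurj, Submodule.map_top]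
  have q8c : Module.finrank K (LinearMap.ker ν)
      = Module.finrank K (LinearMap.range dB ⊓ LinearMap.range fj : Submodule K (S.X₂.X (i+1))) := by
    rw [hν, LinearMap.ker_domRestrict, ← Submodule.finrank_map_subtype_eq (LinearMap.range dB),
      Submodule.map_comap_subtype, ← hexj]
  -- conclude
  have e0 : Module.finrank K (LinearMap.range δh.hom) = Module.finrank K (LinearMap.range Φ.hom) :=
    (congrArg (fun p : Submodule K (S.X₁.homology (i+1)) => Module.finrank K p) hrange).symm
  show (Module.finrank K (LinearMap.range δh.hom) : ℤ)
      = (Module.finrank K (LinearMap.range dB) : ℤ)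
        - (Module.finrank K (LinearMap.range dA) : ℤ)
        - (Module.finrank K (LinearMap.range dC) : ℤ)
  rw [e0]
  rw [q2a, q2b] at q2
  rw [q3] at q1
  rw [q6, q6'] at q4
  rw [q8b, q8c] at q8a
  rw [q5] at q4
  omega
end

section
/- Let K be a field and let f : A• → B• be a morphism of cochain complexes of finite-dimensional K-vector spaces. Then for every integer i, the rank of the induced map H^i(f) : H^i(A•) → H^i(B•) equals the rank of the linear map A^i ⊕ B^{i−1} → A^{i+1} ⊕ B^i given by (a, b) ↦ (d_A^i(a), f^i(a) + d_B^{i−1}(b)), minus the rank of d_A^i, minus the rank of d_B^{i−1}. -/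
open CategoryTheory HomologicalComplex

section Aux

open Module

variable {K : Type*} [Field K]

lemma aux_finrank_map_of_injective {M N : Type*} [AddCommGroup M] [Module K M]
    [AddCommGroup N] [Module K N] (f : M →ₗ[K] N) (hf : Function.Injective f)
    (p : Submodule K M) : finrank K (p.map f) = finrank K p :=
  (LinearEquiv.finrank_eq (Submodule.equivMapOfInjective f hf p)).symm

lemma aux_finrank_map_mkQ {M : Type*} [AddCommGroup M] [Module K M] [FiniteDimensional K M]
    (q T : Submodule K M) (hq : q ≤ T) :
    finrank K (T.map q.mkQ) + finrank K q = finrank K T := by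
  have e := LinearMap.finrank_range_add_finrank_ker (q.mkQ.comp T.subtype)
  rw [LinearMap.range_comp, Submodule.range_subtype] at e
  have hker : LinearMap.ker (q.mkQ.comp T.subtype) = Submodule.comap T.subtype q := by
    ext x
    simp [LinearMap.mem_ker, Submodule.Quotient.mk_eq_zero]
  rw [hker] at e
  rwa [LinearEquiv.finrank_eq (Submodule.comapSubtypeEquivOfLe hq)] at e

lemma aux_rank_prod {M N₁ N₂ : Type*} [AddCommGroup M] [Module K M] [FiniteDimensional K M]
    [AddCommGroup N₁] [Module K N₁] [AddCommGroup N₂] [Module K N₂]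
    (g : M →ₗ[K] N₁) (h : M →ₗ[K] N₂) :
    finrank K (LinearMap.range (g.prod h))
      = finrank K (LinearMap.range g) + finrank K ((LinearMap.ker g).map h) := by
  have e1 := LinearMap.finrank_range_add_finrank_ker (g.prod h)
  have e2 := LinearMap.finrank_range_add_finrank_ker g
  have e3 := LinearMap.finrank_range_add_finrank_ker (h.comp (LinearMap.ker g).subtype)
  rw [LinearMap.ker_prod] at e1
  rw [LinearMap.range_comp, Submodule.range_subtype] at e3
  have hker : LinearMap.ker (h.comp (LinearMap.ker g).subtype)
      = Submodule.comap (LinearMap.ker g).subtype (LinearMap.ker g ⊓ LinearMap.ker h) := by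
    ext x
    exact ⟨fun hx => ⟨x.2, hx⟩, fun hx => hx.2⟩
  rw [hker, LinearEquiv.finrank_eq (Submodule.comapSubtypeEquivOfLe
    (p := LinearMap.ker g ⊓ LinearMap.ker h) (q := LinearMap.ker g) inf_le_left)] at e3
  omega

/-- rank is invariant under pre- and post-composition with isomorphisms. -/
lemma aux_rank_iso_comp {M M' N N' : ModuleCat K} (e : M ≅ M') (e' : N ≅ N') (g : M' ⟶ N) :
    ModuleCat.rank (e.hom ≫ g ≫ e'.hom) = ModuleCat.rank g := by
  have hsurj : Function.Surjective e.hom.hom := e.toLinearEquiv.surjective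
  have hinj : Function.Injective e'.hom.hom := e'.toLinearEquiv.injective
  have h1 : LinearMap.range (e.hom ≫ g ≫ e'.hom).hom
      = (LinearMap.range g.hom).map e'.hom.hom := by
    show LinearMap.range ((e'.hom.hom.comp g.hom).comp
      e.hom.hom) = _
    rw [LinearMap.range_comp, LinearMap.range_eq_top.2 hsurj, Submodule.map_top,
      LinearMap.range_comp]
  show finrank K _ = finrank K _
  rw [h1, aux_finrank_map_of_injective _ hinj]

end Aux

namespace CategoryTheory.ShortComplex

variable {R : Type*} [Ring R] {S₁ S₂ : ShortComplex (ModuleCat R)}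

/-- The concrete left homology map data associated to a morphism of short complexes
of modules. -/
noncomputable def moduleCatLeftHomologyMapData (φ : S₁ ⟶ S₂) :
    LeftHomologyMapData φ S₁.moduleCatLeftHomologyData S₂.moduleCatLeftHomologyData where
  φK := ModuleCat.ofHom (φ.τ₂.hom.restrict
    (p := LinearMap.ker S₁.g.hom) (q := LinearMap.ker S₂.g.hom) (fun x hx => by
      have h23 := LinearMap.congr_fun
        (congrArg ModuleCat.Hom.hom φ.comm₂₃) x
      simp only [LinearMap.mem_ker] at hx ⊢
      have : S₂.g.hom (φ.τ₂.hom x) = φ.τ₃.hom (S₁.g.hom x) := h23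
      rw [this, hx, map_zero]))
  φH := ModuleCat.ofHom (Submodule.mapQ _ _ (φ.τ₂.hom.restrict
    (p := LinearMap.ker S₁.g.hom) (q := LinearMap.ker S₂.g.hom) (fun x hx => by
      have h23 := LinearMap.congr_fun
        (congrArg ModuleCat.Hom.hom φ.comm₂₃) x
      simp only [LinearMap.mem_ker] at hx ⊢
      have : S₂.g.hom (φ.τ₂.hom x) = φ.τ₃.hom (S₁.g.hom x) := h23
      rw [this, hx, map_zero]))
    (by
      rintro _ ⟨x, rfl⟩
      have h12 := LinearMap.congr_fun
        (congrArg ModuleCat.Hom.hom φ.comm₁₂) x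
      exact ⟨φ.τ₁.hom x, Subtype.ext (by exact h12)⟩))
  commi := by
    ext x
    rfl
  commf' := by
    apply ModuleCat.hom_ext
    apply LinearMap.ext
    intro x
    apply Subtype.ext
    have h12 := LinearMap.congr_fun
      (congrArg ModuleCat.Hom.hom φ.comm₁₂) x
    exact h12.symm
  commπ := by
    apply ModuleCat.hom_ext
    apply LinearMap.ext
    intro x
    rfl

end CategoryTheory.ShortComplex


open Module in
lemma aux_rank_shortComplex_homologyMap {K : Type*} [Field K]
    {S₁ S₂ : CategoryTheory.ShortComplex (ModuleCat K)} (φ : S₁ ⟶ S₂)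
    [FiniteDimensional K S₁.X₂] [FiniteDimensional K S₂.X₂] :
    ModuleCat.rank (CategoryTheory.ShortComplex.homologyMap φ)
      + Module.finrank K (LinearMap.range S₂.f.hom)
      = Module.finrank K ↥(Submodule.map φ.τ₂.hom (LinearMap.ker S₁.g.hom)
          ⊔ LinearMap.range S₂.f.hom) := by
  classical
  set γ := CategoryTheory.ShortComplex.moduleCatLeftHomologyMapData φ with hγ
  set k : (LinearMap.ker S₁.g.hom) →ₗ[K] (LinearMap.ker S₂.g.hom) := γ.φK.hom with hk
  set R₁ := LinearMap.range S₁.moduleCatToCycles with hR₁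
  set R₂ := LinearMap.range S₂.moduleCatToCycles with hR₂
  set T := LinearMap.range k ⊔ R₂ with hT
  have hr : ModuleCat.rank (CategoryTheory.ShortComplex.homologyMap φ)
      = ModuleCat.rank γ.φH := by
    rw [γ.homologyMap_eq]
    exact aux_rank_iso_comp _ (S₂.moduleCatLeftHomologyData.homologyIso).symm _
  have hrange : LinearMap.range γ.φH.hom = Submodule.map R₂.mkQ T := by
    have h0 : LinearMap.comp γ.φH.hom R₁.mkQ = R₂.mkQ.comp k :=
      LinearMap.ext fun x => rfl
    have h1 : LinearMap.range γ.φH.hom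
        = LinearMap.range (LinearMap.comp γ.φH.hom R₁.mkQ) :=
      (LinearMap.range_comp_of_range_eq_top _
        (LinearMap.range_eq_top.2 R₁.mkQ_surjective)).symm
    rw [h1]
    exact (congrArg LinearMap.range h0).trans ((LinearMap.range_comp k R₂.mkQ).trans (by
      rw [hT, Submodule.map_sup, Submodule.mkQ_map_self, sup_bot_eq]))
  have hcount : ModuleCat.rank γ.φH + Module.finrank K R₂ = Module.finrank K T := by
    show Module.finrank K (LinearMap.range γ.φH.hom) + _ = _
    rw [hrange]
    exact aux_finrank_map_mkQ R₂ T le_sup_right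
  have hsubinj : Function.Injective (LinearMap.ker S₂.g.hom).subtype :=
    Submodule.injective_subtype _
  have hmapk : Submodule.map (LinearMap.ker S₂.g.hom).subtype (LinearMap.range k)
      = Submodule.map φ.τ₂.hom (LinearMap.ker S₁.g.hom) := by
    have hc : (LinearMap.ker S₂.g.hom).subtype.comp k
        = LinearMap.comp φ.τ₂.hom (LinearMap.ker S₁.g.hom).subtype :=
      LinearMap.ext fun x => rfl
    rw [← LinearMap.range_comp, hc, LinearMap.range_comp, Submodule.range_subtype]
  have hmapR₂ : Submodule.map (LinearMap.ker S₂.g.hom).subtype R₂ = LinearMap.range S₂.f.hom := by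
    have hc : (LinearMap.ker S₂.g.hom).subtype.comp S₂.moduleCatToCycles
        = S₂.f.hom :=
      LinearMap.ext fun x => rfl
    rw [hR₂, ← LinearMap.range_comp, hc]
  have eT : Module.finrank K T
      = Module.finrank K ↥(Submodule.map φ.τ₂.hom (LinearMap.ker S₁.g.hom)
          ⊔ LinearMap.range S₂.f.hom) := by
    rw [← hmapk, ← hmapR₂, ← Submodule.map_sup, aux_finrank_map_of_injective _ hsubinj, hT]
  have eR₂ : Module.finrank K R₂ = Module.finrank K (LinearMap.range S₂.f.hom) := by
    rw [← hmapR₂, aux_finrank_map_of_injective _ hsubinj]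
  rw [hr, eR₂.symm, hcount, eT]

/-- **Rank of the map induced on cohomology.**
Let `f : A• → B•` be a morphism of cochain complexes of finite-dimensional `K`-vector
spaces.  Then for every `i : ℤ`, the rank of the induced map
`H^i(f) : H^i(A•) → H^i(B•)` equals the rank of the map
`A^i ⊕ B^{i−1} → A^{i+1} ⊕ B^i`, `(a, b) ↦ (d_A^i a, f^i a + d_B^{i−1} b)`,
minus the rank of `d_A^i`, minus the rank of `d_B^{i−1}`. -/
theorem rank_homologyMap_eq {K : Type*} [Field K]
    (A B : CochainComplex (ModuleCat K) ℤ)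
    (hA : ∀ i : ℤ, FiniteDimensional K (A.X i))
    (hB : ∀ i : ℤ, FiniteDimensional K (B.X i))
    (f : A ⟶ B) (i : ℤ) :
    (ModuleCat.rank (homologyMap f i) : ℤ)
      = Module.finrank K (LinearMap.range
          (LinearMap.prod
            ((A.d i (i + 1)).hom.comp (LinearMap.fst K (A.X i) (B.X (i - 1))))
            (((f.f i).hom.comp (LinearMap.fst K (A.X i) (B.X (i - 1))))
              + ((B.d (i - 1) i).hom.comp (LinearMap.snd K (A.X i) (B.X (i - 1)))))))
        - ModuleCat.rank (A.d i (i + 1))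
        - ModuleCat.rank (B.d (i - 1) i) := by
  classical
  haveI := hA i
  haveI := hB i
  haveI := hA (i + 1)
  haveI := hB (i - 1)
  haveI : FiniteDimensional K ((A.sc i).X₂) := hA i
  haveI : FiniteDimensional K ((B.sc i).X₂) := hB i
  set φS := (shortComplexFunctor (ModuleCat K) (ComplexShape.up ℤ) i).map f with hφS
  have key0 := aux_rank_shortComplex_homologyMap φS
  have key : ModuleCat.rank (homologyMap f i) + ModuleCat.rank (B.d (i - 1) i)
      = Module.finrank K ↥(Submodule.map (f.f i).hom (LinearMap.ker (A.d i (i + 1)).hom)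
          ⊔ LinearMap.range (B.d (i - 1) i).hom) := by
    have hp : (ComplexShape.up ℤ).prev i = i - 1 := CochainComplex.prev ℤ i
    have hq : (ComplexShape.up ℤ).next i = i + 1 := CochainComplex.next ℤ i
    rw [← hp, ← hq]
    exact key0
  have hprod := aux_rank_prod
    ((A.d i (i + 1)).hom.comp (LinearMap.fst K (A.X i) (B.X (i - 1))))
    (((f.f i).hom.comp (LinearMap.fst K (A.X i) (B.X (i - 1))))
      + ((B.d (i - 1) i).hom.comp (LinearMap.snd K (A.X i) (B.X (i - 1)))))
  have h2 : Module.finrank K (LinearMap.range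
      ((A.d i (i + 1)).hom.comp (LinearMap.fst K (A.X i) (B.X (i - 1)))))
      = ModuleCat.rank (A.d i (i + 1)) := by
    show _ = Module.finrank K (LinearMap.range (A.d i (i + 1)).hom)
    rw [LinearMap.range_comp, LinearMap.range_eq_top.2 LinearMap.fst_surjective,
      Submodule.map_top]
  have h3 : Submodule.map
      (((f.f i).hom.comp (LinearMap.fst K (A.X i) (B.X (i - 1))))
        + ((B.d (i - 1) i).hom.comp (LinearMap.snd K (A.X i) (B.X (i - 1)))))
      (LinearMap.ker ((A.d i (i + 1)).hom.comp (LinearMap.fst K (A.X i) (B.X (i - 1)))))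
      = Submodule.map (f.f i).hom (LinearMap.ker (A.d i (i + 1)).hom)
          ⊔ LinearMap.range (B.d (i - 1) i).hom := by
    ext y
    simp only [Submodule.mem_map, LinearMap.mem_ker, Submodule.mem_sup, LinearMap.add_apply,
      LinearMap.coe_comp, Function.comp_apply, LinearMap.fst_apply, LinearMap.snd_apply,
      LinearMap.mem_range]
    constructor
    · rintro ⟨⟨a, b⟩, ha, rfl⟩
      exact ⟨f.f i a, ⟨a, ha, rfl⟩, B.d (i - 1) i b, ⟨b, rfl⟩, rfl⟩
    · rintro ⟨y₁, ⟨a, ha, rfl⟩, y₂, ⟨b, rfl⟩, rfl⟩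
      exact ⟨(a, b), ha, rfl⟩
  rw [h2, h3] at hprod
  rw [hprod]
  omega
end
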